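/- Let n ≥ 5 and 2 ≤ k < n/2 be integers and ξ : ℝ → ℝ a C² function with |ξ'(t)| < 1 for all t. Define m(t) = (2^{1-k}/n)·C(n,k)·(1+ξ'(t))^k·e^{((n-2k)/2)(t - ξ(t))}. Then for all t₁ ≤ t₂, m(t₂) - m(t₁) = ∫_{t₁}^{t₂} F_k[ξ](τ)·(1-ξ'(τ))^{-(k-1)}·e^{-((n+2k)/2)ξ(τ)}·e^{((n-2k)/2)τ} dτ, where F_k[ξ](t) = 2^{1-k}·C(n-1,k-1)·e^{2kξ(t)}(1-ξ'(t)²)^{k-1}(ξ''(t) + ((n-2k)/(2k))(1-ξ'(t)²)). -/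

import Mathlib

open Real intervalIntegral

theorem stmt_5 (n k : ℕ) (hn : 5 ≤ n) (hk : 2 ≤ k) (hkn : 2 * k < n)
    (ξ : ℝ → ℝ) (hξ : ContDiff ℝ 2 ξ) (hξ' : ∀ t, |deriv ξ t| < 1)
    (Fk : ℝ → ℝ)
    (hFk : ∀ t, Fk t = (2:ℝ) ^ ((1:ℝ) - (k:ℝ)) * ((n - 1).choose (k - 1) : ℝ) *
        Real.exp (2 * (k:ℝ) * ξ t) * (1 - (deriv ξ t) ^ 2) ^ (k - 1) *
        (deriv (deriv ξ) t + (((n:ℝ) - 2 * (k:ℝ)) / (2 * (k:ℝ))) * (1 - (deriv ξ t) ^ 2)))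
    (m : ℝ → ℝ)
    (hm : ∀ t, m t = ((2:ℝ) ^ ((1:ℝ) - (k:ℝ)) / (n:ℝ)) * (n.choose k : ℝ) *
        (1 + deriv ξ t) ^ k * Real.exp (((n:ℝ) - 2 * (k:ℝ)) / 2 * (t - ξ t))) :
    ∀ t₁ t₂ : ℝ, t₁ ≤ t₂ →
      m t₂ - m t₁ =
        ∫ τ in t₁..t₂, Fk τ * (1 - deriv ξ τ) ^ (-((k:ℝ) - 1)) *
          Real.exp (-(((n:ℝ) + 2 * (k:ℝ)) / 2) * ξ τ) *
          Real.exp (((n:ℝ) - 2 * (k:ℝ)) / 2 * τ) := by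
  intro t₁ t₂ h12
  have hk0 : (k:ℝ) ≠ 0 := by positivity
  have hn0 : (n:ℝ) ≠ 0 := by positivity
  -- derivative facts
  have hdiff : Differentiable ℝ ξ := hξ.differentiable (by norm_num)
  have hd1 : ContDiff ℝ 1 (deriv ξ) := by
    have h2' : ContDiff ℝ ((1:WithTop ℕ∞) + 1) ξ := by
      rw [show ((1:WithTop ℕ∞) + 1) = 2 by norm_num]; exact hξ
    exact (contDiff_succ_iff_deriv.mp h2').2.2
  have hucont : Continuous (deriv ξ) := hd1.continuous
  have hu'cont : Continuous (deriv (deriv ξ)) := hd1.continuous_deriv le_rfl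
  have hu : ∀ t, HasDerivAt ξ (deriv ξ t) t := fun t => (hdiff t).hasDerivAt
  have hu' : ∀ t, HasDerivAt (deriv ξ) (deriv (deriv ξ) t) t :=
    fun t => ((hd1.differentiable one_ne_zero) t).hasDerivAt
  have hlt : ∀ t, 0 < 1 - deriv ξ t := fun t => by
    have := (abs_lt.mp (hξ' t)).2; linarith
  have hgt : ∀ t, 0 < 1 + deriv ξ t := fun t => by
    have := (abs_lt.mp (hξ' t)).1; linarith
  -- binomial identity
  have hbin : (k:ℝ) * (n.choose k : ℝ) = (n:ℝ) * ((n-1).choose (k-1) : ℝ) := by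
    have : k * n.choose k = n * (n-1).choose (k-1) := by
      obtain ⟨n', rfl⟩ : ∃ n', n = n' + 1 := ⟨n - 1, by omega⟩
      obtain ⟨k', rfl⟩ : ∃ k', k = k' + 1 := ⟨k - 1, by omega⟩
      simp only [Nat.add_sub_cancel]
      rw [mul_comm, Nat.add_one_mul_choose_eq, mul_comm]
    exact_mod_cast this
  have hkcast : ((k - 1 : ℕ) : ℝ) = (k:ℝ) - 1 := by
    push_cast [Nat.cast_sub (by omega : 1 ≤ k)]; ring
  set g : ℝ → ℝ := fun τ => Fk τ * (1 - deriv ξ τ) ^ (-((k:ℝ) - 1)) *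
      Real.exp (-(((n:ℝ) + 2 * (k:ℝ)) / 2) * ξ τ) *
      Real.exp (((n:ℝ) - 2 * (k:ℝ)) / 2 * τ) with hg
  have hmfun : m = fun t => ((2:ℝ) ^ ((1:ℝ) - (k:ℝ)) / (n:ℝ)) * (n.choose k : ℝ) *
      ((1 + deriv ξ t) ^ k * Real.exp (((n:ℝ) - 2 * (k:ℝ)) / 2 * (t - ξ t))) := by
    funext t; rw [hm]; ring
  have key : ∀ t, HasDerivAt m (g t) t := by
    intro t
    have h1 : HasDerivAt (fun t => (1 + deriv ξ t) ^ k)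
        ((k:ℝ) * (1 + deriv ξ t) ^ (k - 1) * (0 + deriv (deriv ξ) t)) t :=
      ((hasDerivAt_const t (1:ℝ)).add (hu' t)).pow k
    have h2 : HasDerivAt (fun t => Real.exp (((n:ℝ) - 2 * (k:ℝ)) / 2 * (t - ξ t)))
        (Real.exp (((n:ℝ) - 2 * (k:ℝ)) / 2 * (t - ξ t)) *
          (((n:ℝ) - 2 * (k:ℝ)) / 2 * (1 - deriv ξ t))) t := by
      have hin : HasDerivAt (fun t => ((n:ℝ) - 2 * (k:ℝ)) / 2 * (t - ξ t))
          (((n:ℝ) - 2 * (k:ℝ)) / 2 * (1 - deriv ξ t)) t :=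
        ((hasDerivAt_id t).sub (hu t)).const_mul _
      exact hin.exp
    have H := ((h1.mul h2).const_mul (((2:ℝ) ^ ((1:ℝ) - (k:ℝ)) / (n:ℝ)) * (n.choose k : ℝ)))
    rw [hmfun]
    convert H using 1
    case e'_4 => rfl
    case e'_5 => rfl
    case e'_8 => rfl
    -- algebraic identity
    rw [hg]
    simp only [hFk]
    set u := deriv ξ t
    set u'' := deriv (deriv ξ) t
    have hpow : (1 - u) ^ (-((k:ℝ) - 1)) = ((1 - u) ^ (k - 1 : ℕ))⁻¹ := by
      rw [← hkcast, Real.rpow_neg (hlt t).le, Real.rpow_natCast]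
    rw [hpow]
    have hsq : (1 - u ^ 2) ^ (k - 1 : ℕ) = (1 - u) ^ (k - 1 : ℕ) * (1 + u) ^ (k - 1 : ℕ) := by
      rw [← mul_pow]; ring_nf
    rw [hsq]
    have hxp : Real.exp (2 * (k:ℝ) * ξ t) * Real.exp (-(((n:ℝ) + 2 * (k:ℝ)) / 2) * ξ t) *
        Real.exp (((n:ℝ) - 2 * (k:ℝ)) / 2 * t) =
        Real.exp (((n:ℝ) - 2 * (k:ℝ)) / 2 * (t - ξ t)) := by
      rw [← Real.exp_add, ← Real.exp_add]; ring_nf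
    have hkp : (1 + u) ^ k = (1 + u) ^ (k - 1 : ℕ) * (1 + u) := by
      rw [← pow_succ]; congr 1; omega
    rw [hkp]
    have hne : ((1 - u) ^ (k - 1 : ℕ)) ≠ 0 := pow_ne_zero _ (ne_of_gt (hlt t))
    have hchoose : (n.choose k : ℝ) = (n:ℝ) * ((n-1).choose (k-1) : ℝ) / (k:ℝ) := by
      field_simp; linarith [hbin]
    rw [hchoose]
    set e1 := Real.exp (2 * (k:ℝ) * ξ t)
    set e2 := Real.exp (-(((n:ℝ) + 2 * (k:ℝ)) / 2) * ξ t)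
    set e3 := Real.exp (((n:ℝ) - 2 * (k:ℝ)) / 2 * t)
    rw [← hxp]
    set A := (1 - u) ^ (k - 1 : ℕ)
    set B := (1 + u) ^ (k - 1 : ℕ)
    field_simp
    ring
  -- continuity of g
  have hgcont : Continuous g := by
    rw [hg]
    have hFc : Continuous Fk := by
      have : Fk = fun t => (2:ℝ) ^ ((1:ℝ) - (k:ℝ)) * ((n - 1).choose (k - 1) : ℝ) *
          Real.exp (2 * (k:ℝ) * ξ t) * (1 - (deriv ξ t) ^ 2) ^ (k - 1) *
          (deriv (deriv ξ) t + (((n:ℝ) - 2 * (k:ℝ)) / (2 * (k:ℝ))) * (1 - (deriv ξ t) ^ 2)) :=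
        funext hFk
      rw [this]
      fun_prop
    have hrc : Continuous (fun τ => (1 - deriv ξ τ) ^ (-((k:ℝ) - 1))) :=
      (continuous_const.sub hucont).rpow_const (fun x => Or.inl (ne_of_gt (hlt x)))
    fun_prop
  rw [intervalIntegral.integral_eq_sub_of_hasDerivAt (fun t _ => key t)
    ((hgcont.intervalIntegrable t₁ t₂))]
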